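/- Let ι be a nonempty finite index set, let yᵢ ∈ (0,1) and aᵢ > 0 for each i ∈ ι, let Y ≥ 0, and define U(S) = (1 − ∏ᵢ (1−yᵢ)^{Sᵢ})·Y − ∑ᵢ Sᵢ·aᵢ for vectors S with all Sᵢ ≥ 0. Let j* ∈ ι minimize aᵢ/(−log(1−yᵢ)) over ι. Then for every such vector S there exists t ≥ 0 such that the vector placing t on coordinate j* and 0 elsewhere achieves U at least U(S). -/

import Mathlib

/-- Seeding only the type `j*` minimizing `aᵢ / (-log (1-yᵢ))` weakly dominates any
seeding vector. -/
theorem single_type_dominates {ι : Type*} [Fintype ι] [Nonempty ι] [DecidableEq ι]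
    (y a : ι → ℝ) (hy : ∀ i, y i ∈ Set.Ioo (0 : ℝ) 1) (ha : ∀ i, 0 < a i)
    (Y : ℝ) (hY : 0 ≤ Y)
    (j : ι) (hj : ∀ i, a j / (-Real.log (1 - y j)) ≤ a i / (-Real.log (1 - y i)))
    (S : ι → ℝ) (hS : ∀ i, 0 ≤ S i) :
    ∃ t : ℝ, 0 ≤ t ∧
      (1 - ∏ i, (1 - y i) ^ (if i = j then t else 0)) * Y
          - ∑ i, (if i = j then t else 0) * a i ≥
        (1 - ∏ i, (1 - y i) ^ (S i)) * Y - ∑ i, S i * a i := by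
  set L : ι → ℝ := fun i => -Real.log (1 - y i) with hL
  have hpos : ∀ i, 0 < 1 - y i := fun i => by have := (hy i).2; linarith
  have hlt1 : ∀ i, 1 - y i < 1 := fun i => by have := (hy i).1; linarith
  have hLpos : ∀ i, 0 < L i := by
    intro i
    have : Real.log (1 - y i) < 0 := Real.log_neg (hpos i) (hlt1 i)
    simp [hL]; linarith
  set t : ℝ := (∑ i, S i * L i) / L j with ht
  have hsum_nonneg : 0 ≤ ∑ i, S i * L i :=
    Finset.sum_nonneg fun i _ => mul_nonneg (hS i) (hLpos i).le
  have htnn : 0 ≤ t := div_nonneg hsum_nonneg (hLpos j).le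
  refine ⟨t, htnn, ?_⟩
  -- products equal
  have hprod1 : (∏ i, (1 - y i) ^ (if i = j then t else 0)) = (1 - y j) ^ t := by
    rw [Finset.prod_eq_single j]
    · simp
    · intro b _ hb; simp [hb]
    · intro h; exact absurd (Finset.mem_univ j) h
  have hprod2 : (1 - y j) ^ t = ∏ i, (1 - y i) ^ (S i) := by
    rw [Real.rpow_def_of_pos (hpos j)]
    have : t * Real.log (1 - y j) = -(∑ i, S i * L i) := by
      have hne : Real.log (1 - y j) ≠ 0 := ne_of_lt (Real.log_neg (hpos j) (hlt1 j))
      have hLj : L j = -Real.log (1 - y j) := rfl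
      rw [ht, hLj, div_mul_eq_mul_div, mul_div_assoc, div_neg, div_self hne]; ring
    rw [mul_comm (Real.log (1 - y j)) t, this]
    have : ∀ i : ι, (1 - y i) ^ (S i) = Real.exp (S i * Real.log (1 - y i)) := by
      intro i; rw [Real.rpow_def_of_pos (hpos i), mul_comm]
    simp_rw [this, ← Real.exp_sum]
    congr 1
    simp only [hL]
    rw [← Finset.sum_neg_distrib]
    congr 1; ext i; ring
  -- costs
  have hcost : (∑ i, (if i = j then t else 0) * a i) ≤ ∑ i, S i * a i := by
    have hL' : (∑ i, (if i = j then t else 0) * a i) = t * a j := by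
      rw [Finset.sum_eq_single j]
      · simp
      · intro b _ hb; simp [hb]
      · intro h; exact absurd (Finset.mem_univ j) h
    rw [hL']
    have h1 : t * a j = ∑ i, S i * L i * (a j / L j) := by
      rw [← Finset.sum_mul, ht]; field_simp
    rw [h1]
    apply Finset.sum_le_sum
    intro i _
    have h2 : S i * L i * (a j / L j) ≤ S i * L i * (a i / L i) :=
      mul_le_mul_of_nonneg_left (hj i) (mul_nonneg (hS i) (hLpos i).le)
    calc S i * L i * (a j / L j) ≤ S i * L i * (a i / L i) := h2
      _ = S i * a i := by
          have hne : Real.log (1 - y i) ≠ 0 := ne_of_lt (Real.log_neg (hpos i) (hlt1 i))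
          field_simp [hL, hne]
  rw [hprod1, hprod2]
  linarith
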